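/- Let k be a field of characteristic zero not containing a primitive 8th root of unity ε₈. Then the diagonal matrix diag(a, aε₈⁶, aε₈, aε₈⁴) ∈ GL₄(k̄), for any nonzero a ∈ k̄, is not conjugate over k̄ to any matrix in GL₄(k). -/

import Mathlib

/-- If `k` is a field of characteristic zero not containing a primitive 8th root of
unity, then the diagonal matrix `diag(a, a·ε₈⁶, a·ε₈, a·ε₈⁴)` over the algebraic
closure of `k` (with `a ≠ 0` and `ε₈` a primitive 8th root of unity) is not conjugate
over the algebraic closure to any matrix with entries in `k`. -/
theorem stmt2 (k : Type*) [Field k] [CharZero k]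
    (hk : ¬ ∃ x : k, IsPrimitiveRoot x 8)
    (ε : AlgebraicClosure k) (hε : IsPrimitiveRoot ε 8)
    (a : AlgebraicClosure k) (ha : a ≠ 0) :
    ¬ ∃ (P : (Matrix (Fin 4) (Fin 4) (AlgebraicClosure k))ˣ)
        (B : Matrix (Fin 4) (Fin 4) k),
      Matrix.diagonal ![a, a * ε ^ 6, a * ε, a * ε ^ 4] =
        (P : Matrix (Fin 4) (Fin 4) (AlgebraicClosure k)) *
          (B.map (algebraMap k (AlgebraicClosure k))) *
          ((P⁻¹ : (Matrix (Fin 4) (Fin 4) (AlgebraicClosure k))ˣ) :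
            Matrix (Fin 4) (Fin 4) (AlgebraicClosure k)) := by
  rintro ⟨P, B, hPB⟩
  set f : k →+* AlgebraicClosure k := algebraMap k (AlgebraicClosure k) with hf
  set L : Subfield (AlgebraicClosure k) := f.fieldRange with hL
  -- trace of powers lies in L
  have key : ∀ n : ℕ, Matrix.trace ((Matrix.diagonal ![a, a * ε ^ 6, a * ε, a * ε ^ 4]) ^ n) ∈ L := by
    intro n
    rw [hPB, Units.conj_pow]
    have hBpow : (B.map f) ^ n = (B ^ n).map f := by
      simp only [← RingHom.mapMatrix_apply, ← map_pow]
    rw [Matrix.trace_mul_cycle, ← Units.val_mul, inv_mul_cancel P, Units.val_one, Matrix.one_mul, hBpow]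
    refine ⟨Matrix.trace (B ^ n), ?_⟩
    simp [Matrix.trace, Matrix.diag, Matrix.map_apply, map_sum]
  have h4 : ε ^ 4 = -1 := by
    have h8 : ε ^ 8 = 1 := hε.pow_eq_one
    have : ε ^ 4 * ε ^ 4 = 1 := by rw [← pow_add]; exact h8
    rcases mul_self_eq_one_iff.mp this with h | h
    · exact absurd h (hε.pow_ne_one_of_pos_of_lt (by norm_num : (4:ℕ) ≠ 0) (by norm_num : (4:ℕ) < 8))
    · exact h
  have tr : ∀ n : ℕ, Matrix.trace ((Matrix.diagonal ![a, a * ε ^ 6, a * ε, a * ε ^ 4]) ^ n)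
      = a ^ n + (a * ε ^ 6) ^ n + (a * ε) ^ n + (a * ε ^ 4) ^ n := by
    intro n
    rw [Matrix.diagonal_pow, Matrix.trace_diagonal]
    simp [Fin.sum_univ_four]
  have t1 : a * ε - a * ε ^ 2 ∈ L := by
    have := key 1; rw [tr 1] at this
    have e : a ^ 1 + (a * ε ^ 6) ^ 1 + (a * ε) ^ 1 + (a * ε ^ 4) ^ 1 = a * ε - a * ε ^ 2 := by
      linear_combination (a * ε ^ 2 + a) * h4
    rwa [e] at this
  have t2 : a ^ 2 * (1 + ε ^ 2) ∈ L := by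
    have := key 2; rw [tr 2] at this
    have e : a ^ 2 + (a * ε ^ 6) ^ 2 + (a * ε) ^ 2 + (a * ε ^ 4) ^ 2 = a ^ 2 * (1 + ε ^ 2) := by
      linear_combination (a ^ 2 * ε ^ 8 - a ^ 2 * ε ^ 4 + a ^ 2 + a ^ 2 * ε ^ 4 - a ^ 2) * h4
    rwa [e] at this
  have t4 : 2 * a ^ 4 ∈ L := by
    have := key 4; rw [tr 4] at this
    have e : a ^ 4 + (a * ε ^ 6) ^ 4 + (a * ε) ^ 4 + (a * ε ^ 4) ^ 4 = 2 * a ^ 4 := by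
      linear_combination (a ^ 4 * (ε ^ 20 - ε ^ 16 + ε ^ 12 - ε ^ 8 + ε ^ 4 - 1) + a ^ 4
        + a ^ 4 * (ε ^ 12 - ε ^ 8 + ε ^ 4 - 1)) * h4
    rwa [e] at this
  have ha4 : (2 : AlgebraicClosure k) * a ^ 4 ≠ 0 := mul_ne_zero two_ne_zero (pow_ne_zero 4 ha)
  have hε2 : ε ^ 2 ∈ L := by
    have e : ε ^ 2 = (a ^ 2 * (1 + ε ^ 2)) ^ 2 / (2 * a ^ 4) := by
      rw [eq_div_iff ha4]; linear_combination -a ^ 4 * h4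
    rw [e]; exact div_mem (pow_mem t2 2) t4
  have h1pe2 : (1 : AlgebraicClosure k) + ε ^ 2 ≠ 0 := by
    intro h
    exact hε.pow_ne_one_of_pos_of_lt (by norm_num : (4:ℕ) ≠ 0) (by norm_num : (4:ℕ) < 8)
      (by linear_combination (ε ^ 2 - 1) * h)
  have h1pe2L : (1 : AlgebraicClosure k) + ε ^ 2 ∈ L := add_mem (one_mem L) hε2
  have ha2 : a ^ 2 ∈ L := by
    have e : a ^ 2 = (a ^ 2 * (1 + ε ^ 2)) / (1 + ε ^ 2) := by field_simp
    rw [e]; exact div_mem t2 h1pe2L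
  have ha2ne : a ^ 2 ≠ 0 := pow_ne_zero 2 ha
  have h2L : (2 : AlgebraicClosure k) ∈ L := by
    have : (2 : AlgebraicClosure k) = 1 + 1 := by norm_num
    rw [this]; exact add_mem (one_mem L) (one_mem L)
  have hε3 : ε ^ 3 ∈ L := by
    have hd : (2 : AlgebraicClosure k) * a ^ 2 ≠ 0 := mul_ne_zero two_ne_zero ha2ne
    have e : ε ^ 3 = (a ^ 2 * ε ^ 2 - a ^ 2 - (a * ε - a * ε ^ 2) ^ 2) / (2 * a ^ 2) := by
      rw [eq_div_iff hd]; linear_combination a ^ 2 * h4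
    rw [e]
    exact div_mem (sub_mem (sub_mem (mul_mem ha2 hε2) ha2) (pow_mem t1 2)) (mul_mem h2L ha2)
  have hεne : ε ≠ 0 := hε.ne_zero (by norm_num)
  have hεL : ε ∈ L := by
    have e : ε = ε ^ 3 / ε ^ 2 := by
      rw [eq_div_iff (pow_ne_zero 2 hεne)]; ring
    rw [e]; exact div_mem hε3 hε2
  obtain ⟨x, hx⟩ := hεL
  rw [← hx] at hε
  exact hk ⟨x, hε.of_map_of_injective f.injective⟩
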